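/- Let H : (0,∞) → ℝ be twice differentiable with lim_{t→∞} t·H''(t) = ∞. Then for every real θ ≠ 0 with 1 + 2θ > 0, lim_{t→∞} (H((1+2θ)t) − 2·H((1+θ)t) + H(t)) / (θ² t) = ∞. Equivalently, in terms of the cumulant exponents G_θ(t) := (H((1+θ)t) − (1+θ)H(t))/θ, the strong intermittency condition holds: lim_{t→∞} (G_{2θ}(t) − G_θ(t))/(θ t) = ∞. -/

import Mathlib

open Filter

/-- Second difference via two applications of the mean value theorem. -/
lemma secdiff_mvt (H : ℝ → ℝ)
    (h1 : ∀ t : ℝ, 0 < t → DifferentiableAt ℝ H t)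
    (h2 : ∀ t : ℝ, 0 < t → DifferentiableAt ℝ (deriv H) t)
    (a h : ℝ) (ha : 0 < a) (hh : 0 < h) :
    ∃ η ∈ Set.Ioo a (a + 2 * h),
      H (a + 2 * h) - 2 * H (a + h) + H a = deriv (deriv H) η * h ^ 2 := by
  set g : ℝ → ℝ := fun x => H (x + h) - H x with hg
  have hgdiff : ∀ x : ℝ, 0 < x → DifferentiableAt ℝ g x := by
    intro x hx
    have : DifferentiableAt ℝ (fun y : ℝ => H (y + h)) x := by
      have := (h1 (x + h) (by linarith)).comp x
        ((differentiableAt_id (𝕜 := ℝ) (x := x)).add_const h)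
      exact this
    exact this.sub (h1 x hx)
  have hgderiv : ∀ x : ℝ, 0 < x → deriv g x = deriv H (x + h) - deriv H x := by
    intro x hx
    have hd1 : DifferentiableAt ℝ (fun y : ℝ => H (y + h)) x := by
      have := (h1 (x + h) (by linarith)).comp x
        ((differentiableAt_id (𝕜 := ℝ) (x := x)).add_const h)
      exact this
    rw [hg, deriv_fun_sub hd1 (h1 x hx), deriv_comp_add_const]
  have hab : a < a + h := by linarith
  obtain ⟨ξ, hξ, hξeq⟩ := exists_deriv_eq_slope g hab
    (fun x hx => ((hgdiff x (lt_of_lt_of_le ha hx.1)).continuousAt).continuousWithinAt)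
    (fun x hx => (hgdiff x (lt_trans ha hx.1)).differentiableWithinAt)
  have hξpos : 0 < ξ := lt_trans ha hξ.1
  obtain ⟨η, hη, hηeq⟩ := exists_deriv_eq_slope (deriv H) (show ξ < ξ + h by linarith)
    (fun x hx => ((h2 x (lt_of_lt_of_le hξpos hx.1)).continuousAt).continuousWithinAt)
    (fun x hx => (h2 x (lt_trans hξpos hx.1)).differentiableWithinAt)
  refine ⟨η, ⟨lt_trans hξ.1 hη.1, by have := hη.2; have := hξ.2; linarith⟩, ?_⟩
  have hgξ : deriv g ξ = deriv H (ξ + h) - deriv H ξ := hgderiv ξ hξpos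
  have e1 : deriv g ξ * h = H (a + 2 * h) - 2 * H (a + h) + H a := by
    rw [hξeq]
    have hne : a + h - a ≠ 0 := by linarith
    field_simp [hg]
    simp only [hg]; ring_nf
  have e2 : deriv H (ξ + h) - deriv H ξ = deriv (deriv H) η * h := by
    rw [hηeq, show ξ + h - ξ = h by ring, div_mul_cancel₀ _ hh.ne']
  rw [← e1, hgξ, e2]; ring

/-- Strong intermittency: if `H` is twice differentiable on `(0,∞)` with
`t · H''(t) → ∞`, then for every `θ ≠ 0` with `1 + 2θ > 0`,
`(H((1+2θ)t) − 2 H((1+θ)t) + H(t)) / (θ² t) → ∞`, i.e. `(G_{2θ}(t) − G_θ(t))/(θ t) → ∞`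
for the cumulant exponents `G_θ(t) = (H((1+θ)t) − (1+θ)H(t))/θ`. -/
theorem strong_intermittency_of_tHpp_tendsto_atTop (H : ℝ → ℝ)
    (h1 : ∀ t : ℝ, 0 < t → DifferentiableAt ℝ H t)
    (h2 : ∀ t : ℝ, 0 < t → DifferentiableAt ℝ (deriv H) t)
    (hlim : Tendsto (fun t : ℝ => t * deriv (deriv H) t) atTop atTop)
    (θ : ℝ) (hθ : θ ≠ 0) (hθ' : 0 < 1 + 2 * θ) :
    Tendsto (fun t : ℝ => (H ((1 + 2 * θ) * t) - 2 * H ((1 + θ) * t) + H t) / (θ ^ 2 * t))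
      atTop atTop := by
  set c₁ : ℝ := min 1 (1 + 2 * θ) with hc₁
  set c₂ : ℝ := max 1 (1 + 2 * θ) with hc₂
  have hc₁pos : 0 < c₁ := lt_min one_pos hθ'
  have hc₂pos : 0 < c₂ := lt_of_lt_of_le hc₁pos (min_le_max)
  rw [tendsto_atTop]
  intro M
  set K : ℝ := max (M * c₂) 0 with hK
  obtain ⟨T, hT⟩ := (tendsto_atTop.1 hlim K).exists_forall_of_atTop
  filter_upwards [eventually_ge_atTop (max 1 (T / c₁))] with t ht
  have ht1 : (1 : ℝ) ≤ t := le_trans (le_max_left _ _) ht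
  have htpos : 0 < t := lt_of_lt_of_le one_pos ht1
  have htT : T ≤ c₁ * t := by
    have := le_trans (le_max_right 1 (T / c₁)) ht
    calc T = (T / c₁) * c₁ := by field_simp
    _ ≤ t * c₁ := by nlinarith
    _ = c₁ * t := by ring
  -- apply the second difference lemma with a = c₁ t, h = |θ| t
  obtain ⟨η, hη, hηeq⟩ := secdiff_mvt H h1 h2 (c₁ * t) (|θ| * t)
    (mul_pos hc₁pos htpos) (mul_pos (abs_pos.2 hθ) htpos)
  have habs : |θ| = θ ∨ |θ| = -θ := abs_choice θ
  have hsum : c₁ * t + 2 * (|θ| * t) = c₂ * t := by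
    rcases habs with h' | h'
    · have hθpos : 0 ≤ θ := abs_eq_self.1 h'
      rw [h', hc₁, hc₂, min_eq_left (by linarith), max_eq_right (by linarith)]; ring
    · have hθneg : θ ≤ 0 := abs_eq_neg_self.1 h'
      rw [h', hc₁, hc₂, min_eq_right (by linarith), max_eq_left (by linarith)]; ring
  have hmid : c₁ * t + |θ| * t = (1 + θ) * t := by
    rcases habs with h' | h'
    · have hθpos : 0 ≤ θ := abs_eq_self.1 h'
      rw [h', hc₁, min_eq_left (by linarith)]; ring
    · have hθneg : θ ≤ 0 := abs_eq_neg_self.1 h'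
      rw [h', hc₁, min_eq_right (by linarith)]; ring
  have hval : H ((1 + 2 * θ) * t) - 2 * H ((1 + θ) * t) + H t
      = deriv (deriv H) η * (θ ^ 2 * t ^ 2) := by
    have h2' : (|θ| * t) ^ 2 = θ ^ 2 * t ^ 2 := by rw [mul_pow, sq_abs]
    rw [← h2', ← hηeq, hmid]
    rcases habs with h' | h'
    · have hθpos : 0 ≤ θ := abs_eq_self.1 h'
      rw [hsum, hc₁, hc₂, min_eq_left (by linarith), max_eq_right (by linarith)]
      ring
    · have hθneg : θ ≤ 0 := abs_eq_neg_self.1 h'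
      rw [hsum, hc₁, hc₂, min_eq_right (by linarith), max_eq_left (by linarith)]
      ring
  have hηlt : η < c₂ * t := by rw [← hsum]; exact hη.2
  have hηgt : c₁ * t < η := hη.1
  have hηpos : 0 < η := lt_trans (mul_pos hc₁pos htpos) hηgt
  have hTη : T ≤ η := le_trans htT hηgt.le
  have hKη : K ≤ η * deriv (deriv H) η := hT η hTη
  have hddη : K / η ≤ deriv (deriv H) η := (div_le_iff₀' hηpos).2 hKη
  have hK0 : 0 ≤ K := le_max_right _ _
  have step1 : (H ((1 + 2 * θ) * t) - 2 * H ((1 + θ) * t) + H t) / (θ ^ 2 * t)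
      = deriv (deriv H) η * t := by
    rw [hval]
    have hθ2 : θ ^ 2 ≠ 0 := pow_ne_zero 2 hθ
    field_simp
  rw [step1]
  have : K / (c₂ * t) ≤ K / η :=
    div_le_div_of_nonneg_left hK0 hηpos hηlt.le |>.trans_eq rfl
  calc M = (M * c₂) / c₂ := by field_simp
    _ ≤ K / c₂ := by gcongr; exact le_max_left _ _
    _ = (K / (c₂ * t)) * t := by field_simp
    _ ≤ (K / η) * t := by
        apply mul_le_mul_of_nonneg_right this htpos.le
    _ ≤ deriv (deriv H) η * t := mul_le_mul_of_nonneg_right hddη htpos.le
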